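/- Under the assumptions of Theorem 1 and with the optimal discriminator D* for each z, the generator cost satisfies C(G) = max_D V(G,D) = 2 ∫ p(z) JSD(p(·|z) ‖ G(·|z)) dz − log 4. -/

import Mathlib

open MeasureTheory

/-- Jensen–Shannon divergence between two densities `p, g` w.r.t. a common measure `μ`:
`JSD(P‖Q) = (1/2) KL(P ‖ M) + (1/2) KL(Q ‖ M)` with `M = (P + Q)/2`. -/
noncomputable def jsdDensity {Y : Type*} [MeasurableSpace Y] (μ : Measure Y)
    (p g : Y → ℝ) : ℝ :=
  (1 / 2) * (∫ y, p y * Real.log (p y / ((p y + g y) / 2)) ∂μ) +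
    (1 / 2) * ∫ y, g y * Real.log (g y / ((p y + g y) / 2)) ∂μ

/-- Per-`z` GAN value `V_z(D) = ∫ p log D + ∫ g log (1 - D)`. -/
noncomputable def ganValue {Y : Type*} [MeasurableSpace Y] (μ : Measure Y)
    (p g D : Y → ℝ) : ℝ :=
  (∫ y, p y * Real.log (D y) ∂μ) + ∫ y, g y * Real.log (1 - D y) ∂μ

/-- Pointwise: `p log(p/((p+g)/2)) = p log(p/(p+g)) + p log 2`. -/
lemma aux_log_half1 (p g : ℝ) (hp : 0 ≤ p) (hg : 0 ≤ g) :
    p * Real.log (p / ((p + g) / 2)) = p * Real.log (p / (p + g)) + p * Real.log 2 := by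
  rcases eq_or_lt_of_le hp with h | h
  · simp [← h]
  · have hpg : 0 < p + g := by linarith
    have : p / ((p + g) / 2) = p / (p + g) * 2 := by field_simp <;> ring
    rw [this, Real.log_mul (by positivity) two_ne_zero]
    ring

/-- Pointwise: `g log(g/((p+g)/2)) = g log(1 - p/(p+g)) + g log 2`. -/
lemma aux_log_half2 (p g : ℝ) (hp : 0 ≤ p) (hg : 0 ≤ g) :
    g * Real.log (g / ((p + g) / 2)) = g * Real.log (1 - p / (p + g)) + g * Real.log 2 := by
  rcases eq_or_lt_of_le hg with h | h
  · simp [← h]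
  · have hpg : 0 < p + g := by linarith
    have h1 : 1 - p / (p + g) = g / (p + g) := by field_simp; ring
    have h2 : g / ((p + g) / 2) = g / (p + g) * 2 := by field_simp <;> ring
    rw [h1, h2, Real.log_mul (by positivity) two_ne_zero]
    ring

/-- Pointwise optimality of `t = a/(a+b)`. -/
lemma aux_pointwise_opt (a b t : ℝ) (ha : 0 ≤ a) (hb : 0 ≤ b)
    (ht0 : 0 < t) (ht1 : t < 1) :
    a * Real.log t + b * Real.log (1 - t) ≤
      a * Real.log (a / (a + b)) + b * Real.log (1 - a / (a + b)) := by
  rcases eq_or_lt_of_le ha with h | hapos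
  · rcases eq_or_lt_of_le hb with h' | hbpos
    · simp [← h, ← h']
    · rw [← h]
      have h0 : (0:ℝ) / (0 + b) = 0 := by simp
      rw [h0]
      simp only [zero_mul, sub_zero, Real.log_one, mul_zero, zero_add]
      have : Real.log (1 - t) ≤ 0 := Real.log_nonpos (by linarith) (by linarith)
      nlinarith [this]
  · rcases eq_or_lt_of_le hb with h' | hbpos
    · rw [← h']
      have hd : a / (a + 0) = 1 := by rw [add_zero, div_self (ne_of_gt hapos)]
      rw [hd]
      simp only [zero_mul, add_zero, Real.log_one, mul_zero]
      have : Real.log t ≤ 0 := Real.log_nonpos (le_of_lt ht0) (le_of_lt ht1)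
      nlinarith [this]
    · have hpg : 0 < a + b := by linarith
      have h1 : 1 - a / (a + b) = b / (a + b) := by field_simp; ring
      rw [h1]
      have l1 : Real.log t - Real.log (a / (a + b)) ≤ t * (a + b) / a - 1 := by
        rw [← Real.log_div (ne_of_gt ht0) (by positivity)]
        have := Real.log_le_sub_one_of_pos (x := t / (a / (a + b))) (by positivity)
        have he : t / (a / (a + b)) = t * (a + b) / a := by field_simp
        rw [he] at this; linarith
      have l2 : Real.log (1 - t) - Real.log (b / (a + b)) ≤ (1 - t) * (a + b) / b - 1 := by
        rw [← Real.log_div (by linarith) (by positivity)]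
        have := Real.log_le_sub_one_of_pos (x := (1 - t) / (b / (a + b)))
          (div_pos (by linarith) (by positivity))
        have he : (1 - t) / (b / (a + b)) = (1 - t) * (a + b) / b := by field_simp
        rw [he] at this; linarith
      have m1 : a * (Real.log t - Real.log (a / (a + b))) ≤ a * (t * (a + b) / a - 1) :=
        mul_le_mul_of_nonneg_left l1 ha
      have m2 : b * (Real.log (1 - t) - Real.log (b / (a + b))) ≤ b * ((1 - t) * (a + b) / b - 1) :=
        mul_le_mul_of_nonneg_left l2 hb
      have e1 : a * (t * (a + b) / a - 1) = t * (a + b) - a := by field_simp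
      have e2 : b * ((1 - t) * (a + b) / b - 1) = (1 - t) * (a + b) - b := by field_simp
      nlinarith [m1, m2]

/-- Per-`z` identity: `V(D*) = 2 JSD - log 4`. -/
lemma aux_ganValue_star {Y : Type*} [MeasurableSpace Y] (μ : Measure Y)
    (p g : Y → ℝ) (hp0 : ∀ y, 0 ≤ p y) (hg0 : ∀ y, 0 ≤ g y)
    (hp1 : ∫ y, p y ∂μ = 1) (hg1 : ∫ y, g y ∂μ = 1)
    (hI1 : Integrable (fun y => p y * Real.log (p y / (p y + g y))) μ)
    (hI2 : Integrable (fun y => g y * Real.log (1 - p y / (p y + g y))) μ) :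
    ganValue μ p g (fun y => p y / (p y + g y)) =
      2 * jsdDensity μ p g - Real.log 4 := by
  have hpI : Integrable p μ := integrable_of_integral_eq_one hp1
  have hgI : Integrable g μ := integrable_of_integral_eq_one hg1
  have e1 : (∫ y, p y * Real.log (p y / ((p y + g y) / 2)) ∂μ) =
      (∫ y, p y * Real.log (p y / (p y + g y)) ∂μ) + Real.log 2 := by
    have : (∫ y, p y * Real.log (p y / ((p y + g y) / 2)) ∂μ) =
        ∫ y, (p y * Real.log (p y / (p y + g y)) + p y * Real.log 2) ∂μ := by
      refine integral_congr_ae (Filter.Eventually.of_forall fun y => ?_)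
      exact aux_log_half1 (p y) (g y) (hp0 y) (hg0 y)
    rw [this, integral_add hI1 (hpI.mul_const _), integral_mul_const _, hp1, one_mul]
  have e2 : (∫ y, g y * Real.log (g y / ((p y + g y) / 2)) ∂μ) =
      (∫ y, g y * Real.log (1 - p y / (p y + g y)) ∂μ) + Real.log 2 := by
    have : (∫ y, g y * Real.log (g y / ((p y + g y) / 2)) ∂μ) =
        ∫ y, (g y * Real.log (1 - p y / (p y + g y)) + g y * Real.log 2) ∂μ := by
      refine integral_congr_ae (Filter.Eventually.of_forall fun y => ?_)
      exact aux_log_half2 (p y) (g y) (hp0 y) (hg0 y)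
    rw [this, integral_add hI2 (hgI.mul_const _), integral_mul_const _, hg1, one_mul]
  have hlog4 : Real.log 4 = 2 * Real.log 2 := by
    rw [show (4:ℝ) = 2 ^ 2 by norm_num, Real.log_pow]; push_cast; ring
  simp only [ganValue, jsdDensity, e1, e2, hlog4]
  ring

/-- Per-`z` inequality: `V(D) ≤ V(D*)`. -/
lemma aux_ganValue_le {Y : Type*} [MeasurableSpace Y] (μ : Measure Y)
    (p g D : Y → ℝ) (hp0 : ∀ y, 0 ≤ p y) (hg0 : ∀ y, 0 ≤ g y)
    (hD : ∀ y, D y ∈ Set.Ioo (0 : ℝ) 1)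
    (hI1 : Integrable (fun y => p y * Real.log (D y)) μ)
    (hI2 : Integrable (fun y => g y * Real.log (1 - D y)) μ)
    (hs1 : Integrable (fun y => p y * Real.log (p y / (p y + g y))) μ)
    (hs2 : Integrable (fun y => g y * Real.log (1 - p y / (p y + g y))) μ) :
    ganValue μ p g D ≤ ganValue μ p g (fun y => p y / (p y + g y)) := by
  unfold ganValue
  rw [← integral_add hI1 hI2, ← integral_add hs1 hs2]
  refine integral_mono (hI1.add hI2) (hs1.add hs2) fun y => ?_
  exact aux_pointwise_opt (p y) (g y) (D y) (hp0 y) (hg0 y) (hD y).1 (hD y).2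

/-- Under the assumptions of Theorem 1 and with the optimal discriminator
`D*(y|z) = p(y|z) / (p(y|z) + G(y|z))` for each `z`, the generator cost satisfies
`C(G) = max_D V(G,D) = 2 ∫ p(z) JSD(p(·|z) ‖ G(·|z)) dz - log 4`. -/
theorem generator_cost_eq_expected_jsd
    {Y Z : Type*} [MeasurableSpace Y] [MeasurableSpace Z]
    (μ : Measure Y) (ν : Measure Z) [SigmaFinite μ] [SigmaFinite ν]
    (pZ : Z → ℝ) (pYZ : Z → Y → ℝ) (G : Z → Y → ℝ)
    (hpZmeas : Measurable pZ) (hpYZmeas : Measurable (Function.uncurry pYZ))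
    (hGmeas : Measurable (Function.uncurry G))
    (hpZ0 : ∀ z, 0 ≤ pZ z) (hpYZ0 : ∀ z y, 0 ≤ pYZ z y) (hG0 : ∀ z y, 0 ≤ G z y)
    (hpZ1 : ∫ z, pZ z ∂ν = 1)
    (hpYZ1 : ∀ z, ∫ y, pYZ z y ∂μ = 1) (hG1 : ∀ z, ∫ y, G z y ∂μ = 1)
    (hIntstar1 : ∀ z, Integrable
      (fun y => pYZ z y * Real.log (pYZ z y / (pYZ z y + G z y))) μ)
    (hIntstar2 : ∀ z, Integrable
      (fun y => G z y * Real.log (1 - pYZ z y / (pYZ z y + G z y))) μ)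
    (hIntVstar : Integrable (fun z => pZ z *
      ganValue μ (pYZ z) (G z) (fun y => pYZ z y / (pYZ z y + G z y))) ν)
    (hIntJSD : Integrable (fun z => pZ z * jsdDensity μ (pYZ z) (G z)) ν) :
    (∀ D : Y → Z → ℝ, Measurable (Function.uncurry D) →
      (∀ y z, D y z ∈ Set.Ioo (0 : ℝ) 1) →
      (∀ z, Integrable (fun y => pYZ z y * Real.log (D y z)) μ) →
      (∀ z, Integrable (fun y => G z y * Real.log (1 - D y z)) μ) →
      Integrable (fun z => pZ z * ganValue μ (pYZ z) (G z) (fun y => D y z)) ν →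
      (∫ z, pZ z * ganValue μ (pYZ z) (G z) (fun y => D y z) ∂ν) ≤
        2 * (∫ z, pZ z * jsdDensity μ (pYZ z) (G z) ∂ν) - Real.log 4) ∧
    (∫ z, pZ z * ganValue μ (pYZ z) (G z)
        (fun y => pYZ z y / (pYZ z y + G z y)) ∂ν) =
      2 * (∫ z, pZ z * jsdDensity μ (pYZ z) (G z) ∂ν) - Real.log 4 := by
  have hpZI : Integrable pZ ν := integrable_of_integral_eq_one hpZ1
  have hstar : ∀ z, ganValue μ (pYZ z) (G z) (fun y => pYZ z y / (pYZ z y + G z y)) =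
      2 * jsdDensity μ (pYZ z) (G z) - Real.log 4 := fun z =>
    aux_ganValue_star μ (pYZ z) (G z) (hpYZ0 z) (hG0 z) (hpYZ1 z) (hG1 z)
      (hIntstar1 z) (hIntstar2 z)
  have hR : (∫ z, pZ z * ganValue μ (pYZ z) (G z)
      (fun y => pYZ z y / (pYZ z y + G z y)) ∂ν) =
      2 * (∫ z, pZ z * jsdDensity μ (pYZ z) (G z) ∂ν) - Real.log 4 := by
    have e : (∫ z, pZ z * ganValue μ (pYZ z) (G z)
        (fun y => pYZ z y / (pYZ z y + G z y)) ∂ν) =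
        ∫ z, (2 * (pZ z * jsdDensity μ (pYZ z) (G z)) - Real.log 4 * pZ z) ∂ν := by
      refine integral_congr_ae (Filter.Eventually.of_forall fun z => ?_)
      simp only [hstar z]; ring
    rw [e, integral_sub (hIntJSD.const_mul 2) (hpZI.const_mul _),
      integral_const_mul _, integral_const_mul _, hpZ1, mul_one]
  refine ⟨fun D hDm hDIoo hID1 hID2 hIVD => ?_, hR⟩
  have hle : (∫ z, pZ z * ganValue μ (pYZ z) (G z) (fun y => D y z) ∂ν) ≤
      ∫ z, pZ z * ganValue μ (pYZ z) (G z) (fun y => pYZ z y / (pYZ z y + G z y)) ∂ν := by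
    refine integral_mono hIVD hIntVstar fun z => ?_
    refine mul_le_mul_of_nonneg_left ?_ (hpZ0 z)
    exact aux_ganValue_le μ (pYZ z) (G z) (fun y => D y z) (hpYZ0 z) (hG0 z)
      (fun y => hDIoo y z) (hID1 z) (hID2 z) (hIntstar1 z) (hIntstar2 z)
  rw [← hR]; exact hle
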